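/- arXiv:1905.00259 — 2 statements merged into one kernel-verified Lean document; each statement's English description precedes it below -/
import Mathlib

section
/- The Robin correction term H_corr(t,x,y,x',y') = −(κ·e^{κ(y+y')}·e^{κ²t}/√(4πt))·exp(−(x−x')²/(4t))·erfc((y+y')/√(4t) + κ√t) satisfies the heat equation ∂_t H_corr − ∂²_{xx} H_corr − ∂²_{yy} H_corr = 0 for t > 0, y, y' ≥ 0, where κ > 0 is a constant and erfc(z) = (2/√π)·∫_z^∞ e^{−s²} ds. -/
open Real

/-- The complementary error function `erfc(z) = (2/√π)·∫_z^∞ e^{−s²} ds`. -/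
noncomputable def erfc (z : ℝ) : ℝ :=
  (2 / Real.sqrt π) * ∫ s in Set.Ioi z, Real.exp (-s ^ 2)

lemma hasDerivAt_erfc (z : ℝ) :
    HasDerivAt erfc (-(2 / Real.sqrt π * Real.exp (-z ^ 2))) z := by
  have hint : MeasureTheory.Integrable (fun s : ℝ => Real.exp (-s ^ 2)) := by
    simpa using integrable_exp_neg_mul_sq (one_pos (α := ℝ))
  have hcont : Continuous fun s : ℝ => Real.exp (-s ^ 2) := by continuity
  have key : erfc = fun w : ℝ => (2 / Real.sqrt π) *
      ((∫ s : ℝ, Real.exp (-s ^ 2)) - (∫ s in Set.Iic (0:ℝ), Real.exp (-s ^ 2))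
        - ∫ s in (0:ℝ)..w, Real.exp (-s ^ 2)) := by
    funext w
    rw [erfc]
    congr 1
    rw [← intervalIntegral.integral_Iic_sub_Iic hint.integrableOn hint.integrableOn,
        ← intervalIntegral.integral_Iic_add_Ioi (b := w) hint.integrableOn hint.integrableOn]
    ring
  rw [key]
  have hd : HasDerivAt (fun w => ∫ s in (0:ℝ)..w, Real.exp (-s ^ 2))
      (Real.exp (-z ^ 2)) z := (hcont.integral_hasStrictDerivAt 0 z).hasDerivAt
  have := ((hd.const_sub ((∫ s : ℝ, Real.exp (-s ^ 2)) -
      (∫ s in Set.Iic (0:ℝ), Real.exp (-s ^ 2)))).const_mul (2 / Real.sqrt π))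
  exact this.congr_deriv (by ring)

set_option maxHeartbeats 2000000 in
/-- The Robin correction term for the half-plane heat kernel satisfies the heat
equation `∂_t H − ∂²_{xx} H − ∂²_{yy} H = 0` for `t > 0` and `y, y' ≥ 0`,
where `κ > 0` is a constant Robin parameter. -/
theorem robin_correction_heat_equation (κ : ℝ) (hκ : 0 < κ) :
    let H : ℝ → ℝ → ℝ → ℝ → ℝ → ℝ := fun t x y x' y' =>
      -(κ * Real.exp (κ * (y + y')) * Real.exp (κ ^ 2 * t) / Real.sqrt (4 * π * t)) *
        Real.exp (-((x - x') ^ 2 / (4 * t))) *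
        erfc ((y + y') / Real.sqrt (4 * t) + κ * Real.sqrt t)
    ∀ t : ℝ, 0 < t → ∀ x x' : ℝ, ∀ y y' : ℝ, 0 ≤ y → 0 ≤ y' →
      deriv (fun s => H s x y x' y') t -
        deriv (deriv (fun u => H t u y x' y')) x -
        deriv (deriv (fun v => H t x v x' y')) y = 0 := by
  intro H t ht x x' y y' hy hy'
  simp only [H]
  have hπ : (0:ℝ) < π := Real.pi_pos
  have ht' : t ≠ 0 := ne_of_gt ht
  have hrt : 0 < Real.sqrt t := Real.sqrt_pos.mpr ht
  have hs4 : Real.sqrt (4 * t) ≠ 0 := by positivity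
  have hqn : Real.sqrt (4 * π * t) ≠ 0 := by positivity
  have hsp : Real.sqrt π ≠ 0 := by positivity
  have hid : ∀ u : ℝ, HasDerivAt (fun w : ℝ => w) 1 u := fun u => hasDerivAt_id u
  -- x part
  have hgx : ∀ u : ℝ, HasDerivAt (fun u : ℝ => Real.exp (-((u - x') ^ 2 / (4 * t))))
      (Real.exp (-((u - x') ^ 2 / (4 * t))) * (-(u - x') / (2 * t))) u := by
    intro u
    have h := ((((((hid u).sub_const x').pow 2).div_const (4 * t)).neg).exp :
      HasDerivAt _ _ u)
    simp only [Pi.neg_apply, Pi.pow_apply, Pi.div_apply] at h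
    convert h using 1
    norm_num
    field_simp
    ring
  have hD1x : ∀ u : ℝ, HasDerivAt
      (fun u : ℝ => -(κ * Real.exp (κ * (y + y')) * Real.exp (κ ^ 2 * t) / Real.sqrt (4 * π * t)) *
        Real.exp (-((u - x') ^ 2 / (4 * t))) * erfc ((y + y') / Real.sqrt (4 * t) + κ * Real.sqrt t))
      (-(κ * Real.exp (κ * (y + y')) * Real.exp (κ ^ 2 * t) / Real.sqrt (4 * π * t)) *
        (Real.exp (-((u - x') ^ 2 / (4 * t))) * (-(u - x') / (2 * t))) *
        erfc ((y + y') / Real.sqrt (4 * t) + κ * Real.sqrt t)) u := fun u =>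
    ((hgx u).const_mul _).mul_const _
  have hderivx : deriv (fun u : ℝ =>
      -(κ * Real.exp (κ * (y + y')) * Real.exp (κ ^ 2 * t) / Real.sqrt (4 * π * t)) *
        Real.exp (-((u - x') ^ 2 / (4 * t))) * erfc ((y + y') / Real.sqrt (4 * t) + κ * Real.sqrt t)) =
      fun u : ℝ => -(κ * Real.exp (κ * (y + y')) * Real.exp (κ ^ 2 * t) / Real.sqrt (4 * π * t)) *
        (Real.exp (-((u - x') ^ 2 / (4 * t))) * (-(u - x') / (2 * t))) *
        erfc ((y + y') / Real.sqrt (4 * t) + κ * Real.sqrt t) :=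
    funext fun u => (hD1x u).deriv
  have hm : HasDerivAt (fun u : ℝ => -(u - x') / (2 * t)) (-1 / (2 * t)) x :=
    (((hid x).sub_const x').neg).div_const (2 * t)
  have hdxx := ((((hgx x).mul hm).const_mul
      (-(κ * Real.exp (κ * (y + y')) * Real.exp (κ ^ 2 * t) / Real.sqrt (4 * π * t)))).mul_const
      (erfc ((y + y') / Real.sqrt (4 * t) + κ * Real.sqrt t))).deriv
  simp only [Pi.mul_apply] at hdxx
  -- y part
  have hav : ∀ v : ℝ, HasDerivAt (fun v : ℝ => Real.exp (κ * (v + y')))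
      (Real.exp (κ * (v + y')) * κ) v := by
    intro v
    have h := ((((hid v).add_const y').const_mul κ)).exp
    simpa using h
  have hzv : ∀ v : ℝ, HasDerivAt (fun v : ℝ => (v + y') / Real.sqrt (4 * t) + κ * Real.sqrt t)
      (1 / Real.sqrt (4 * t)) v := fun v =>
    (((hid v).add_const y').div_const (Real.sqrt (4 * t))).add_const (κ * Real.sqrt t)
  have herfv : ∀ v : ℝ, HasDerivAt
      (fun v : ℝ => erfc ((v + y') / Real.sqrt (4 * t) + κ * Real.sqrt t))
      (-(2 / Real.sqrt π * Real.exp (-((v + y') / Real.sqrt (4 * t) + κ * Real.sqrt t) ^ 2)) *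
        (1 / Real.sqrt (4 * t))) v := fun v => (hasDerivAt_erfc _).comp v (hzv v)
  have hD1y : ∀ v : ℝ, HasDerivAt
      (fun v : ℝ => -(κ * Real.exp (κ * (v + y')) * Real.exp (κ ^ 2 * t) / Real.sqrt (4 * π * t)) *
        Real.exp (-((x - x') ^ 2 / (4 * t))) * erfc ((v + y') / Real.sqrt (4 * t) + κ * Real.sqrt t))
      (-(κ * Real.exp (κ * (v + y')) * Real.exp (κ ^ 2 * t) / Real.sqrt (4 * π * t)) *
        Real.exp (-((x - x') ^ 2 / (4 * t))) *
        (κ * erfc ((v + y') / Real.sqrt (4 * t) + κ * Real.sqrt t) -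
          2 / Real.sqrt π * Real.exp (-((v + y') / Real.sqrt (4 * t) + κ * Real.sqrt t) ^ 2) /
            Real.sqrt (4 * t))) v := by
    intro v
    have h := (((((hav v).const_mul κ).mul_const (Real.exp (κ ^ 2 * t))).div_const
      (Real.sqrt (4 * π * t))).neg.mul_const (Real.exp (-((x - x') ^ 2 / (4 * t))))).mul (herfv v)
    simp only [Pi.neg_apply] at h
    refine h.congr_deriv ?_
    field_simp
    ring
  have hderivy : deriv (fun v : ℝ =>
      -(κ * Real.exp (κ * (v + y')) * Real.exp (κ ^ 2 * t) / Real.sqrt (4 * π * t)) *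
        Real.exp (-((x - x') ^ 2 / (4 * t))) * erfc ((v + y') / Real.sqrt (4 * t) + κ * Real.sqrt t)) =
      fun v : ℝ => -(κ * Real.exp (κ * (v + y')) * Real.exp (κ ^ 2 * t) / Real.sqrt (4 * π * t)) *
        Real.exp (-((x - x') ^ 2 / (4 * t))) *
        (κ * erfc ((v + y') / Real.sqrt (4 * t) + κ * Real.sqrt t) -
          2 / Real.sqrt π * Real.exp (-((v + y') / Real.sqrt (4 * t) + κ * Real.sqrt t) ^ 2) /
            Real.sqrt (4 * t)) := funext fun v => (hD1y v).deriv
  have hXv : HasDerivAt (fun v : ℝ =>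
      Real.exp (-((v + y') / Real.sqrt (4 * t) + κ * Real.sqrt t) ^ 2))
      (Real.exp (-((y + y') / Real.sqrt (4 * t) + κ * Real.sqrt t) ^ 2) *
        (-(2 * ((y + y') / Real.sqrt (4 * t) + κ * Real.sqrt t) * (1 / Real.sqrt (4 * t))))) y := by
    have h := (((hzv y).pow 2).neg).exp
    simp only [Pi.neg_apply, Pi.pow_apply, Pi.div_apply] at h
    convert h using 1
    norm_num
  have hfy := ((((hav y).const_mul κ).mul_const (Real.exp (κ ^ 2 * t))).div_const
      (Real.sqrt (4 * π * t))).neg.mul_const (Real.exp (-((x - x') ^ 2 / (4 * t))))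
  have hgy := ((herfv y).const_mul κ).sub
      ((hXv.const_mul (2 / Real.sqrt π)).div_const (Real.sqrt (4 * t)))
  have hdyy := (hfy.mul hgy).deriv
  simp only [Pi.mul_def, Pi.neg_def, Pi.div_def, Pi.sub_def] at hdyy
  -- t part
  have hE2 : HasDerivAt (fun s : ℝ => Real.exp (κ ^ 2 * s)) (Real.exp (κ ^ 2 * t) * κ ^ 2) t := by
    have h := ((hid t).const_mul (κ ^ 2)).exp
    simpa using h
  have hqd : HasDerivAt (fun s : ℝ => Real.sqrt (4 * π * s))
      (4 * π / (2 * Real.sqrt (4 * π * t))) t := by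
    have h := ((hid t).const_mul (4 * π)).sqrt (by positivity)
    simpa using h
  have hGt : HasDerivAt (fun s : ℝ => Real.exp (-((x - x') ^ 2 / (4 * s))))
      (Real.exp (-((x - x') ^ 2 / (4 * t))) * ((x - x') ^ 2 / (4 * t ^ 2))) t := by
    have h := (((hasDerivAt_const t ((x - x') ^ 2)).div
      ((hid t).const_mul 4) (by positivity)).neg).exp
    simp only [Pi.neg_apply, Pi.pow_apply, Pi.div_apply] at h
    convert h using 1
    field_simp
    ring
  have hsq : HasDerivAt (fun s : ℝ => Real.sqrt (4 * s)) (4 / (2 * Real.sqrt (4 * t))) t := by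
    have h := ((hid t).const_mul 4).sqrt (by positivity)
    simpa using h
  have hzt : HasDerivAt (fun s : ℝ => (y + y') / Real.sqrt (4 * s) + κ * Real.sqrt s)
      (κ / (2 * Real.sqrt t) - 2 * (y + y') / Real.sqrt (4 * t) ^ 3) t := by
    have h := ((hasDerivAt_const t (y + y')).div hsq hs4).add
      ((Real.hasDerivAt_sqrt ht').const_mul κ)
    refine h.congr_deriv ?_
    field_simp
    ring
  have herft : HasDerivAt (fun s : ℝ => erfc ((y + y') / Real.sqrt (4 * s) + κ * Real.sqrt s))
      (-(2 / Real.sqrt π * Real.exp (-((y + y') / Real.sqrt (4 * t) + κ * Real.sqrt t) ^ 2)) *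
        (κ / (2 * Real.sqrt t) - 2 * (y + y') / Real.sqrt (4 * t) ^ 3)) t :=
    (hasDerivAt_erfc _).comp t hzt
  have hft := ((hE2.const_mul (κ * Real.exp (κ * (y + y')))).div hqd hqn).neg
  have hdt := ((hft.mul hGt).mul herft).deriv
  simp only [Pi.mul_def, Pi.neg_def, Pi.div_def] at hdt
  rw [hdt, hderivx, hdxx, hderivy, hdyy]
  have h4 : Real.sqrt (4 * t) = 2 * Real.sqrt t := by
    rw [show (4:ℝ) * t = 2 ^ 2 * t by ring, Real.sqrt_mul (by positivity) t,
      Real.sqrt_sq (by norm_num)]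
  have hπ4 : Real.sqrt (4 * π * t) = 2 * (Real.sqrt π * Real.sqrt t) := by
    rw [show (4:ℝ) * π * t = 2 ^ 2 * (π * t) by ring, Real.sqrt_mul (by positivity),
      Real.sqrt_sq (by norm_num), Real.sqrt_mul pi_nonneg]
  rw [h4, hπ4]
  obtain ⟨R, hR⟩ : ∃ R, Real.sqrt t = R := ⟨_, rfl⟩
  obtain ⟨S, hS⟩ : ∃ S, Real.sqrt π = S := ⟨_, rfl⟩
  have hR0 : R ≠ 0 := hR ▸ (ne_of_gt hrt)
  have hS0 : S ≠ 0 := hS ▸ hsp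
  rw [hR, hS]
  rw [show t = R * R from by rw [← hR]; exact (Real.mul_self_sqrt ht.le).symm]
  rw [show π = S * S from by rw [← hS]; exact (Real.mul_self_sqrt hπ.le).symm]
  field_simp
  ring
end

section
/- The model function ℋ(X, ξ, ξ') = (4π)⁻¹·exp(−X²/4)·(exp(−(ξ−ξ')²/4) + exp(−(ξ+ξ')²/4)) satisfies the model equation (−∂²_{XX} − (X/2)∂_X − ∂²_{ξξ} − (ξ/2)∂_ξ − (ξ'/2)∂_{ξ'} − 1)ℋ = 0 on the set {ξ = ξ'}. The same holds with the plus sign between the two exponentials replaced by a minus sign. -/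
open Real

private lemma expPoly {p : ℝ → ℝ} {p' : ℝ} {X : ℝ} (h : HasDerivAt p p' X) :
    HasDerivAt (fun u => Real.exp (p u)) (p' * Real.exp (p X)) X := by
  simpa [mul_comm] using h.exp

private lemma hA (x : ℝ) : HasDerivAt (fun u : ℝ => -u ^ 2 / 4) (-x / 2) x := by
  have : HasDerivAt (fun u : ℝ => -u ^ 2 / 4) _ x := ((hasDerivAt_pow 2 x).neg).div_const 4
  convert this using 1
  ring

private lemma hB (ξ x : ℝ) :
    HasDerivAt (fun v : ℝ => -(v - ξ) ^ 2 / 4) (-(x - ξ) / 2) x := by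
  have : HasDerivAt (fun v : ℝ => -(v - ξ) ^ 2 / 4) _ x := (((hasDerivAt_id x).sub_const ξ).pow 2).neg.div_const 4
  convert this using 1
  simp only [id_eq]
  ring

private lemma hC (ξ x : ℝ) :
    HasDerivAt (fun v : ℝ => -(v + ξ) ^ 2 / 4) (-(x + ξ) / 2) x := by
  have : HasDerivAt (fun v : ℝ => -(v + ξ) ^ 2 / 4) _ x := (((hasDerivAt_id x).add_const ξ).pow 2).neg.div_const 4
  convert this using 1
  simp only [id_eq]
  ring

private lemma hD (ξ x : ℝ) :
    HasDerivAt (fun w : ℝ => -(ξ - w) ^ 2 / 4) ((ξ - x) / 2) x := by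
  have : HasDerivAt (fun w : ℝ => -(ξ - w) ^ 2 / 4) _ x := (((hasDerivAt_const x ξ).sub (hasDerivAt_id x)).pow 2).neg.div_const 4
  convert this using 1
  simp only [id_eq, Pi.sub_apply]
  ring

private lemma hE (ξ x : ℝ) :
    HasDerivAt (fun w : ℝ => -(ξ + w) ^ 2 / 4) (-(ξ + x) / 2) x := by
  have : HasDerivAt (fun w : ℝ => -(ξ + w) ^ 2 / 4) _ x := (((hasDerivAt_const x ξ).add (hasDerivAt_id x)).pow 2).neg.div_const 4
  convert this using 1
  simp only [id_eq, Pi.add_apply]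
  ring

/-- The Neumann (`ε = 1`) and Dirichlet (`ε = −1`) leading-order models at the
side face satisfy the model equation
`(−∂²_{XX} − (X/2)∂_X − ∂²_{ξξ} − (ξ/2)∂_ξ − (ξ'/2)∂_{ξ'} − 1)ℋ = 0`
on the set `{ξ = ξ'}`. -/
theorem side_face_model_equation (ε : ℝ) (hε : ε = 1 ∨ ε = -1) :
    let F : ℝ → ℝ → ℝ → ℝ := fun X ξ ξ' =>
      (4 * π)⁻¹ * Real.exp (-X ^ 2 / 4) *
        (Real.exp (-(ξ - ξ') ^ 2 / 4) + ε * Real.exp (-(ξ + ξ') ^ 2 / 4))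
    ∀ X ξ : ℝ,
      -(deriv (deriv (fun u => F u ξ ξ)) X) - X / 2 * deriv (fun u => F u ξ ξ) X -
        deriv (deriv (fun v => F X v ξ)) ξ - ξ / 2 * deriv (fun v => F X v ξ) ξ -
        ξ / 2 * deriv (fun w => F X ξ w) ξ - F X ξ ξ = 0 := by
  intro F X ξ
  simp only [F]
  set c : ℝ := (4 * π)⁻¹ with hc
  set K : ℝ := Real.exp (-(ξ - ξ) ^ 2 / 4) + ε * Real.exp (-(ξ + ξ) ^ 2 / 4) with hK
  -- X-derivatives
  have h1 : ∀ x : ℝ, HasDerivAt (fun u : ℝ =>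
      c * Real.exp (-u ^ 2 / 4) *
        (Real.exp (-(ξ - ξ) ^ 2 / 4) + ε * Real.exp (-(ξ + ξ) ^ 2 / 4)))
      (c * (-x / 2 * Real.exp (-x ^ 2 / 4)) * K) x :=
    fun x => ((expPoly (hA x)).const_mul c).mul_const K
  have hd1 : deriv (fun u : ℝ =>
      c * Real.exp (-u ^ 2 / 4) *
        (Real.exp (-(ξ - ξ) ^ 2 / 4) + ε * Real.exp (-(ξ + ξ) ^ 2 / 4)))
      = fun x => c * (-x / 2 * Real.exp (-x ^ 2 / 4)) * K :=
    funext fun x => (h1 x).deriv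
  have h2 : HasDerivAt (fun x : ℝ => c * (-x / 2 * Real.exp (-x ^ 2 / 4)) * K)
      (c * (-1 / 2 * Real.exp (-X ^ 2 / 4) +
        -X / 2 * (-X / 2 * Real.exp (-X ^ 2 / 4))) * K) X := by
    have hp : HasDerivAt (fun x : ℝ => -x / 2 * Real.exp (-x ^ 2 / 4))
        (-1 / 2 * Real.exp (-X ^ 2 / 4) + -X / 2 * (-X / 2 * Real.exp (-X ^ 2 / 4))) X := by
      have : HasDerivAt (fun x : ℝ => -x / 2 * Real.exp (-x ^ 2 / 4)) _ X := ((hasDerivAt_id X).neg.div_const 2).mul (expPoly (hA X))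
      simpa using this
    exact (hp.const_mul c).mul_const K
  -- ξ-derivatives (second slot)
  have hg : ∀ v : ℝ, HasDerivAt (fun v : ℝ =>
      Real.exp (-(v - ξ) ^ 2 / 4) + ε * Real.exp (-(v + ξ) ^ 2 / 4))
      (-(v - ξ) / 2 * Real.exp (-(v - ξ) ^ 2 / 4) +
        ε * (-(v + ξ) / 2 * Real.exp (-(v + ξ) ^ 2 / 4))) v :=
    fun v => (expPoly (hB ξ v)).add ((expPoly (hC ξ v)).const_mul ε)
  have h3 : ∀ v : ℝ, HasDerivAt (fun v : ℝ =>
      c * Real.exp (-X ^ 2 / 4) *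
        (Real.exp (-(v - ξ) ^ 2 / 4) + ε * Real.exp (-(v + ξ) ^ 2 / 4)))
      (c * Real.exp (-X ^ 2 / 4) *
        (-(v - ξ) / 2 * Real.exp (-(v - ξ) ^ 2 / 4) +
          ε * (-(v + ξ) / 2 * Real.exp (-(v + ξ) ^ 2 / 4)))) v :=
    fun v => (hg v).const_mul (c * Real.exp (-X ^ 2 / 4))
  have hd3 : deriv (fun v : ℝ =>
      c * Real.exp (-X ^ 2 / 4) *
        (Real.exp (-(v - ξ) ^ 2 / 4) + ε * Real.exp (-(v + ξ) ^ 2 / 4)))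
      = fun v => c * Real.exp (-X ^ 2 / 4) *
        (-(v - ξ) / 2 * Real.exp (-(v - ξ) ^ 2 / 4) +
          ε * (-(v + ξ) / 2 * Real.exp (-(v + ξ) ^ 2 / 4))) :=
    funext fun v => (h3 v).deriv
  have h4 : HasDerivAt (fun v : ℝ => c * Real.exp (-X ^ 2 / 4) *
      (-(v - ξ) / 2 * Real.exp (-(v - ξ) ^ 2 / 4) +
        ε * (-(v + ξ) / 2 * Real.exp (-(v + ξ) ^ 2 / 4))))
      (c * Real.exp (-X ^ 2 / 4) *
        ((-1 / 2 * Real.exp (-(ξ - ξ) ^ 2 / 4) +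
          -(ξ - ξ) / 2 * (-(ξ - ξ) / 2 * Real.exp (-(ξ - ξ) ^ 2 / 4))) +
         ε * (-1 / 2 * Real.exp (-(ξ + ξ) ^ 2 / 4) +
          -(ξ + ξ) / 2 * (-(ξ + ξ) / 2 * Real.exp (-(ξ + ξ) ^ 2 / 4))))) ξ := by
    have p1 : HasDerivAt (fun v : ℝ => -(v - ξ) / 2 * Real.exp (-(v - ξ) ^ 2 / 4))
        (-1 / 2 * Real.exp (-(ξ - ξ) ^ 2 / 4) +
          -(ξ - ξ) / 2 * (-(ξ - ξ) / 2 * Real.exp (-(ξ - ξ) ^ 2 / 4))) ξ := by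
      have : HasDerivAt (fun v : ℝ => -(v - ξ) / 2 * Real.exp (-(v - ξ) ^ 2 / 4)) _ ξ := (((hasDerivAt_id ξ).sub_const ξ).neg.div_const 2).mul (expPoly (hB ξ ξ))
      simpa using this
    have p2 : HasDerivAt (fun v : ℝ => -(v + ξ) / 2 * Real.exp (-(v + ξ) ^ 2 / 4))
        (-1 / 2 * Real.exp (-(ξ + ξ) ^ 2 / 4) +
          -(ξ + ξ) / 2 * (-(ξ + ξ) / 2 * Real.exp (-(ξ + ξ) ^ 2 / 4))) ξ := by
      have : HasDerivAt (fun v : ℝ => -(v + ξ) / 2 * Real.exp (-(v + ξ) ^ 2 / 4)) _ ξ := (((hasDerivAt_id ξ).add_const ξ).neg.div_const 2).mul (expPoly (hC ξ ξ))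
      simpa using this
    exact (p1.add (p2.const_mul ε)).const_mul (c * Real.exp (-X ^ 2 / 4))
  -- ξ'-derivative (third slot)
  have h5 : HasDerivAt (fun w : ℝ =>
      c * Real.exp (-X ^ 2 / 4) *
        (Real.exp (-(ξ - w) ^ 2 / 4) + ε * Real.exp (-(ξ + w) ^ 2 / 4)))
      (c * Real.exp (-X ^ 2 / 4) *
        ((ξ - ξ) / 2 * Real.exp (-(ξ - ξ) ^ 2 / 4) +
          ε * (-(ξ + ξ) / 2 * Real.exp (-(ξ + ξ) ^ 2 / 4)))) ξ :=
    ((expPoly (hD ξ ξ)).add ((expPoly (hE ξ ξ)).const_mul ε)).const_mul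
      (c * Real.exp (-X ^ 2 / 4))
  rw [hd1, hd3, h2.deriv, h4.deriv, h5.deriv]
  simp only []
  simp only [hK, sub_self, neg_zero, ne_eq, OfNat.ofNat_ne_zero, not_false_eq_true,
    zero_pow, zero_div, Real.exp_zero]
  ring
end
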